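/- arXiv:1102.0405 — 2 statements merged into one kernel-verified Lean document; each statement's English description precedes it below -/
import Mathlib

section
/- Let C be a copula such that for each y ∈ (0,1) the map t ↦ −log C(y^{1-t},y^t) is convex on [0,1]. Then for any nonnegative weight function h with B_h = ∫₀¹ (log y)² h(y) dy ∈ (0,∞), the best approximation A*(t) = B_h^{-1} ∫₀¹ (log C(y^{1-t},y^t)/log y)(log y)² h(y) dy is a convex function of t on [0,1]. -/
open MeasureTheory Set intervalIntegral

def IsCopula (C : ℝ → ℝ → ℝ) : Prop :=
  (∀ u ∈ Set.Icc (0:ℝ) 1, C u 0 = 0 ∧ C u 1 = u) ∧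
  (∀ v ∈ Set.Icc (0:ℝ) 1, C 0 v = 0 ∧ C 1 v = v) ∧
  (∀ u₁ u₂ v₁ v₂ : ℝ, u₁ ∈ Set.Icc (0:ℝ) 1 → u₂ ∈ Set.Icc (0:ℝ) 1 →
    v₁ ∈ Set.Icc (0:ℝ) 1 → v₂ ∈ Set.Icc (0:ℝ) 1 → u₁ ≤ u₂ → v₁ ≤ v₂ →
    0 ≤ C u₂ v₂ - C u₂ v₁ - C u₁ v₂ + C u₁ v₁)

variable {C : ℝ → ℝ → ℝ}

lemma copula_nonneg (hC : IsCopula C) {u v : ℝ} (hu : u ∈ Icc (0:ℝ) 1)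
    (hv : v ∈ Icc (0:ℝ) 1) : 0 ≤ C u v := by
  have h0 : (0:ℝ) ∈ Icc (0:ℝ) 1 := ⟨le_refl 0, zero_le_one⟩
  have h := hC.2.2 0 u 0 v h0 hu h0 hv hu.1 hv.1
  have h1 := (hC.1 u hu).1
  have h2 := (hC.2.1 v hv).1
  have h3 := (hC.1 0 h0).1
  linarith

lemma copula_mono_left (hC : IsCopula C) {u₁ u₂ v : ℝ} (h1 : u₁ ∈ Icc (0:ℝ) 1)
    (h2 : u₂ ∈ Icc (0:ℝ) 1) (hv : v ∈ Icc (0:ℝ) 1) (h12 : u₁ ≤ u₂) :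
    C u₁ v ≤ C u₂ v := by
  have h0 : (0:ℝ) ∈ Icc (0:ℝ) 1 := ⟨le_refl 0, zero_le_one⟩
  have h := hC.2.2 u₁ u₂ 0 v h1 h2 h0 hv h12 hv.1
  have ha := (hC.1 u₁ h1).1
  have hb := (hC.1 u₂ h2).1
  linarith

lemma copula_mono_right (hC : IsCopula C) {u v₁ v₂ : ℝ} (hu : u ∈ Icc (0:ℝ) 1)
    (h1 : v₁ ∈ Icc (0:ℝ) 1) (h2 : v₂ ∈ Icc (0:ℝ) 1) (h12 : v₁ ≤ v₂) :
    C u v₁ ≤ C u v₂ := by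
  have h0 : (0:ℝ) ∈ Icc (0:ℝ) 1 := ⟨le_refl 0, zero_le_one⟩
  have h := hC.2.2 0 u v₁ v₂ h0 hu h1 h2 hu.1 h12
  have ha := (hC.2.1 v₁ h1).1
  have hb := (hC.2.1 v₂ h2).1
  linarith

lemma copula_le_one (hC : IsCopula C) {u v : ℝ} (hu : u ∈ Icc (0:ℝ) 1)
    (hv : v ∈ Icc (0:ℝ) 1) : C u v ≤ 1 := by
  have h1 : (1:ℝ) ∈ Icc (0:ℝ) 1 := ⟨zero_le_one, le_refl 1⟩
  have := copula_mono_left hC hu h1 hv hu.2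
  have := (hC.2.1 v hv).2
  linarith [hv.2]

lemma rpow_mem (hy : y ∈ Ioo (0:ℝ) 1) {c : ℝ} (hc : 0 ≤ c) :
    y ^ c ∈ Icc (0:ℝ) 1 :=
  ⟨Real.rpow_nonneg hy.1.le c, Real.rpow_le_one hy.1.le hy.2.le hc⟩

lemma phi_le (hC : IsCopula C)
    (hconv : ∀ y ∈ Set.Ioo (0:ℝ) 1,
      ConvexOn ℝ (Set.Icc (0:ℝ) 1) (fun t => - Real.log (C (y ^ (1 - t)) (y ^ t))))
    {y : ℝ} (hy : y ∈ Ioo (0:ℝ) 1) {t : ℝ} (ht : t ∈ Icc (0:ℝ) 1) :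
    - Real.log (C (y ^ (1 - t)) (y ^ t)) ≤ - Real.log y := by
  have h0 : (0:ℝ) ∈ Icc (0:ℝ) 1 := ⟨le_refl 0, zero_le_one⟩
  have h1 : (1:ℝ) ∈ Icc (0:ℝ) 1 := ⟨zero_le_one, le_refl 1⟩
  have key := (hconv y hy).2 h0 h1 (by linarith [ht.2] : (0:ℝ) ≤ 1 - t) ht.1 (by ring)
  simp only [smul_eq_mul, mul_zero, mul_one, zero_add] at key
  have hyI : y ∈ Icc (0:ℝ) 1 := ⟨hy.1.le, hy.2.le⟩
  have e0 : C (y ^ (1 - (0:ℝ))) (y ^ (0:ℝ)) = y := by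
    rw [sub_zero, Real.rpow_one, Real.rpow_zero, (hC.1 y hyI).2]
  have e1 : C (y ^ (1 - (1:ℝ))) (y ^ (1:ℝ)) = y := by
    rw [sub_self, Real.rpow_one, Real.rpow_zero, (hC.2.1 y hyI).2]
  rw [e0, e1] at key
  calc - Real.log (C (y ^ (1 - t)) (y ^ t)) ≤ (1-t) * -Real.log y + t * -Real.log y := key
    _ = - Real.log y := by ring

lemma ratio_mem (hC : IsCopula C)
    (hconv : ∀ y ∈ Set.Ioo (0:ℝ) 1,
      ConvexOn ℝ (Set.Icc (0:ℝ) 1) (fun t => - Real.log (C (y ^ (1 - t)) (y ^ t))))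
    {y : ℝ} (hy : y ∈ Ioo (0:ℝ) 1) {t : ℝ} (ht : t ∈ Icc (0:ℝ) 1) :
    Real.log (C (y ^ (1 - t)) (y ^ t)) / Real.log y ∈ Icc (0:ℝ) 1 := by
  have hly : Real.log y < 0 := Real.log_neg hy.1 hy.2
  have hu := rpow_mem hy (by linarith [ht.2] : (0:ℝ) ≤ 1 - t)
  have hv := rpow_mem hy ht.1
  have hCle : C (y ^ (1 - t)) (y ^ t) ≤ 1 := copula_le_one hC hu hv
  have hC0 : 0 ≤ C (y ^ (1 - t)) (y ^ t) := copula_nonneg hC hu hv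
  have hlogC : Real.log (C (y ^ (1 - t)) (y ^ t)) ≤ 0 := Real.log_nonpos hC0 hCle
  have hphi := phi_le hC hconv hy ht
  have heq : Real.log (C (y ^ (1 - t)) (y ^ t)) / Real.log y
      = (- Real.log (C (y ^ (1 - t)) (y ^ t))) / (- Real.log y) := (neg_div_neg_eq _ _).symm
  rw [heq]
  constructor
  · exact div_nonneg (by linarith) (by linarith)
  · rw [div_le_one (by linarith : (0:ℝ) < - Real.log y)]
    exact hphi

lemma ratio_convex_ineq
    (hconv : ∀ y ∈ Set.Ioo (0:ℝ) 1,
      ConvexOn ℝ (Set.Icc (0:ℝ) 1) (fun t => - Real.log (C (y ^ (1 - t)) (y ^ t))))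
    {y : ℝ} (hy : y ∈ Ioo (0:ℝ) 1) {t₁ t₂ a b : ℝ}
    (ht₁ : t₁ ∈ Icc (0:ℝ) 1) (ht₂ : t₂ ∈ Icc (0:ℝ) 1)
    (ha : 0 ≤ a) (hb : 0 ≤ b) (hab : a + b = 1) :
    Real.log (C (y ^ (1 - (a * t₁ + b * t₂))) (y ^ (a * t₁ + b * t₂))) / Real.log y ≤
      a * (Real.log (C (y ^ (1 - t₁)) (y ^ t₁)) / Real.log y) +
      b * (Real.log (C (y ^ (1 - t₂)) (y ^ t₂)) / Real.log y) := by
  have hly : Real.log y < 0 := Real.log_neg hy.1 hy.2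
  have key := (hconv y hy).2 ht₁ ht₂ ha hb hab
  simp only [smul_eq_mul] at key
  rw [← mul_div_assoc, ← mul_div_assoc, ← add_div, div_le_div_right_of_neg hly]
  linarith

/-- Monotone surrogate for the copula composition. -/
noncomputable def Gaux (C : ℝ → ℝ → ℝ) (t y : ℝ) : ℝ :=
  C (min 1 ((max y 0) ^ (1 - t))) (min 1 ((max y 0) ^ t))

lemma min_rpow_mem {y c : ℝ} : min 1 ((max y 0) ^ c) ∈ Icc (0:ℝ) 1 :=
  ⟨le_min zero_le_one (Real.rpow_nonneg (le_max_right y 0) c), min_le_left _ _⟩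

lemma Gaux_monotone (hC : IsCopula C) {t : ℝ} (ht : t ∈ Icc (0:ℝ) 1) :
    Monotone (Gaux C t) := by
  intro y₁ y₂ hle
  have hm : max y₁ 0 ≤ max y₂ 0 := max_le_max hle le_rfl
  have h1 : min 1 ((max y₁ 0) ^ (1 - t)) ≤ min 1 ((max y₂ 0) ^ (1 - t)) :=
    min_le_min le_rfl (Real.rpow_le_rpow (le_max_right y₁ 0) hm (by linarith [ht.2]))
  have h2 : min 1 ((max y₁ 0) ^ t) ≤ min 1 ((max y₂ 0) ^ t) :=
    min_le_min le_rfl (Real.rpow_le_rpow (le_max_right y₁ 0) hm ht.1)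
  calc Gaux C t y₁ ≤ C (min 1 ((max y₂ 0) ^ (1 - t))) (min 1 ((max y₁ 0) ^ t)) :=
        copula_mono_left hC min_rpow_mem min_rpow_mem min_rpow_mem h1
    _ ≤ Gaux C t y₂ := copula_mono_right hC min_rpow_mem min_rpow_mem min_rpow_mem h2

lemma Gaux_eq (C : ℝ → ℝ → ℝ) {t y : ℝ} (ht : t ∈ Icc (0:ℝ) 1) (hy : y ∈ Ioc (0:ℝ) 1) :
    Gaux C t y = C (y ^ (1 - t)) (y ^ t) := by
  have hmax : max y 0 = y := max_eq_left hy.1.le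
  have e1 : min 1 (y ^ (1 - t)) = y ^ (1 - t) :=
    min_eq_right (Real.rpow_le_one hy.1.le hy.2 (by linarith [ht.2]))
  have e2 : min 1 (y ^ t) = y ^ t :=
    min_eq_right (Real.rpow_le_one hy.1.le hy.2 ht.1)
  rw [Gaux, hmax, e1, e2]

lemma integrable_F (hC : IsCopula C)
    (hconv : ∀ y ∈ Set.Ioo (0:ℝ) 1,
      ConvexOn ℝ (Set.Icc (0:ℝ) 1) (fun t => - Real.log (C (y ^ (1 - t)) (y ^ t))))
    (h : ℝ → ℝ)
    (hBfin : IntervalIntegrable (fun y => (Real.log y) ^ 2 * h y) volume 0 1)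
    {t : ℝ} (ht : t ∈ Icc (0:ℝ) 1) :
    IntervalIntegrable (fun y =>
      (Real.log (C (y ^ (1 - t)) (y ^ t)) / Real.log y) * ((Real.log y) ^ 2 * h y))
      volume 0 1 := by
  rw [intervalIntegrable_iff_integrableOn_Ioc_of_le zero_le_one] at hBfin ⊢
  have hG : Measurable (Gaux C t) := (Gaux_monotone hC ht).measurable
  have hFmeas : Measurable (fun y => Real.log (Gaux C t y) / Real.log y) :=
    (Real.measurable_log.comp hG).div Real.measurable_log
  have hae : (fun y => Real.log (Gaux C t y) / Real.log y)
      =ᵐ[volume.restrict (Ioc (0:ℝ) 1)]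
      (fun y => Real.log (C (y ^ (1 - t)) (y ^ t)) / Real.log y) := by
    filter_upwards [ae_restrict_mem measurableSet_Ioc] with y hy
    rw [Gaux_eq C ht hy]
  have hFa : AEStronglyMeasurable (fun y => Real.log (C (y ^ (1 - t)) (y ^ t)) / Real.log y)
      (volume.restrict (Ioc (0:ℝ) 1)) :=
    hFmeas.aestronglyMeasurable.congr hae
  apply Integrable.mono' hBfin.norm (hFa.mul hBfin.aestronglyMeasurable)
  filter_upwards [ae_restrict_mem measurableSet_Ioc] with y hy
  have habs : |Real.log (C (y ^ (1 - t)) (y ^ t)) / Real.log y| ≤ 1 := by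
    rcases lt_or_eq_of_le hy.2 with h1 | h1
    · have hr := ratio_mem hC hconv ⟨hy.1, h1⟩ ht
      rw [abs_le]; exact ⟨by linarith [hr.1], hr.2⟩
    · rw [h1, Real.log_one, div_zero]; norm_num
  have hb1 : ‖Real.log (C (y ^ (1 - t)) (y ^ t)) / Real.log y‖ ≤ 1 := by
    rwa [Real.norm_eq_abs]
  conv_lhs => rw [Pi.mul_apply, norm_mul]
  exact (mul_le_mul_of_nonneg_right hb1 (norm_nonneg _)).trans (le_of_eq (one_mul _))

theorem stmt9 (C : ℝ → ℝ → ℝ) (hC : IsCopula C)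
    (hconv : ∀ y ∈ Set.Ioo (0:ℝ) 1,
      ConvexOn ℝ (Set.Icc (0:ℝ) 1) (fun t => - Real.log (C (y ^ (1 - t)) (y ^ t))))
    (h : ℝ → ℝ) (hnn : ∀ y ∈ Set.Ioo (0:ℝ) 1, 0 ≤ h y)
    (Bh : ℝ) (hBh : Bh = ∫ y in (0:ℝ)..1, (Real.log y) ^ 2 * h y) (hBpos : 0 < Bh)
    (hBfin : IntervalIntegrable (fun y => (Real.log y) ^ 2 * h y) volume 0 1)
    (Astar : ℝ → ℝ)
    (hAstar : ∀ t, Astar t =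
      Bh⁻¹ * ∫ y in (0:ℝ)..1,
        (Real.log (C (y ^ (1 - t)) (y ^ t)) / Real.log y) * ((Real.log y) ^ 2 * h y)) :
    ConvexOn ℝ (Set.Icc (0:ℝ) 1) Astar := by
  constructor
  · exact convex_Icc 0 1
  · intro t₁ ht₁ t₂ ht₂ a b ha hb hab
    simp only [smul_eq_mul]
    have hmid : a * t₁ + b * t₂ ∈ Icc (0:ℝ) 1 := by
      have := (convex_Icc (0:ℝ) 1) ht₁ ht₂ ha hb hab
      simpa using this
    have i₁ := integrable_F hC hconv h hBfin ht₁
    have i₂ := integrable_F hC hconv h hBfin ht₂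
    have imid := integrable_F hC hconv h hBfin hmid
    set F : ℝ → ℝ → ℝ := fun t y =>
      (Real.log (C (y ^ (1 - t)) (y ^ t)) / Real.log y) * ((Real.log y) ^ 2 * h y) with hF
    have key : (∫ y in (0:ℝ)..1, F (a * t₁ + b * t₂) y)
        ≤ a * (∫ y in (0:ℝ)..1, F t₁ y) + b * (∫ y in (0:ℝ)..1, F t₂ y) := by
      have step : (∫ y in (0:ℝ)..1, F (a * t₁ + b * t₂) y)
          ≤ ∫ y in (0:ℝ)..1, (a * F t₁ y + b * F t₂ y) := by
        apply intervalIntegral.integral_mono_on zero_le_one imid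
          ((i₁.const_mul a).add (i₂.const_mul b))
        intro y hy
        rcases eq_or_lt_of_le hy.1 with h0 | h0
        · have hlog : Real.log y = 0 := by rw [← h0, Real.log_zero]
          simp [hF, hlog]
        rcases lt_or_eq_of_le hy.2 with h1 | h1
        · have hyo : y ∈ Ioo (0:ℝ) 1 := ⟨h0, h1⟩
          have hwnn : 0 ≤ (Real.log y) ^ 2 * h y := mul_nonneg (sq_nonneg _) (hnn y hyo)
          have hcv := ratio_convex_ineq hconv hyo ht₁ ht₂ ha hb hab
          calc Real.log (C (y ^ (1 - (a * t₁ + b * t₂))) (y ^ (a * t₁ + b * t₂))) / Real.log y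
                * ((Real.log y) ^ 2 * h y)
              ≤ (a * (Real.log (C (y ^ (1 - t₁)) (y ^ t₁)) / Real.log y) +
                 b * (Real.log (C (y ^ (1 - t₂)) (y ^ t₂)) / Real.log y))
                * ((Real.log y) ^ 2 * h y) := mul_le_mul_of_nonneg_right hcv hwnn
            _ = a * (Real.log (C (y ^ (1 - t₁)) (y ^ t₁)) / Real.log y * ((Real.log y) ^ 2 * h y))
                + b * (Real.log (C (y ^ (1 - t₂)) (y ^ t₂)) / Real.log y * ((Real.log y) ^ 2 * h y)) := by
                ring
        · have hlog : Real.log y = 0 := by rw [h1, Real.log_one]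
          simp [hF, hlog]
      rw [intervalIntegral.integral_add (i₁.const_mul a) (i₂.const_mul b),
        intervalIntegral.integral_const_mul, intervalIntegral.integral_const_mul] at step
      exact step
    rw [hAstar, hAstar, hAstar]
    have hinv : (0:ℝ) ≤ Bh⁻¹ := inv_nonneg.2 hBpos.le
    calc Bh⁻¹ * ∫ y in (0:ℝ)..1, F (a * t₁ + b * t₂) y
        ≤ Bh⁻¹ * (a * (∫ y in (0:ℝ)..1, F t₁ y) + b * (∫ y in (0:ℝ)..1, F t₂ y)) :=
          mul_le_mul_of_nonneg_left key hinv
      _ = a * (Bh⁻¹ * ∫ y in (0:ℝ)..1, F t₁ y) + b * (Bh⁻¹ * ∫ y in (0:ℝ)..1, F t₂ y) := by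
          ring
end

section
/- Let V(ξ) = ∫₀¹∫₀¹ k(x,y) dξ(x) dξ(y) be defined on the set P of Borel probability measures on [0,1], where k: [0,1]² → ℝ is a continuous symmetric positive semidefinite kernel. Then a probability measure η ∈ P minimizes V over P if and only if ∫₀¹ k(x,y) dη(y) ≥ ∫₀¹∫₀¹ k(x,y) dη(x) dη(y) for all x ∈ [0,1]. -/
open MeasureTheory Set


section helpers
variable {K : ℝ → ℝ → ℝ} {M : ℝ}

lemma integrable_of_bdd {α : Type*} [MeasurableSpace α] {f : α → ℝ} {μ : Measure α}
    [IsFiniteMeasure μ] (hm : AEStronglyMeasurable f μ) (hb : ∀ x, |f x| ≤ M) :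
    Integrable f μ :=
  ⟨hm, HasFiniteIntegral.of_bounded (C := M) (Filter.Eventually.of_forall hb)⟩

lemma hKxc (hKc : Continuous fun p : ℝ × ℝ => K p.1 p.2) (x : ℝ) :
    Continuous fun y => K x y := hKc.comp (Continuous.prodMk_right x)

lemma intK_inner (hKc : Continuous fun p : ℝ × ℝ => K p.1 p.2) (hM : ∀ x y, |K x y| ≤ M)
    (x : ℝ) (β : Measure ℝ) [IsFiniteMeasure β] : Integrable (fun y => K x y) β :=
  integrable_of_bdd (hKxc hKc x).aestronglyMeasurable (hM x)

lemma absK_integral_le (hM : ∀ x y, |K x y| ≤ M) (x : ℝ) (β : Measure ℝ)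
    [IsProbabilityMeasure β] : |∫ y, K x y ∂β| ≤ M := by
  have := norm_integral_le_of_norm_le_const (μ := β) (f := fun y => K x y) (C := M)
    (Filter.Eventually.of_forall fun y => by rw [Real.norm_eq_abs]; exact hM x y)
  simpa using this

lemma smK_outer (hKc : Continuous fun p : ℝ × ℝ => K p.1 p.2) (β : Measure ℝ) [SFinite β] :
    StronglyMeasurable fun x => ∫ y, K x y ∂β :=
  hKc.stronglyMeasurable.integral_prod_right'

lemma intK_outer (hKc : Continuous fun p : ℝ × ℝ => K p.1 p.2) (hM : ∀ x y, |K x y| ≤ M)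
    (α β : Measure ℝ) [IsFiniteMeasure α] [IsProbabilityMeasure β] :
    Integrable (fun x => ∫ y, K x y ∂β) α :=
  integrable_of_bdd (smK_outer hKc β).aestronglyMeasurable
    (fun x => absK_integral_le hM x β)

lemma ae_mem_of_compl {μ : Measure ℝ} {s : Set ℝ} (h : μ sᶜ = 0) : ∀ᵐ x ∂μ, x ∈ s := by
  rw [MeasureTheory.ae_iff]; convert h using 2; rfl

end helpers

noncomputable def Agrid (N : ℕ) (i : Fin (N+1)) : Set ℝ :=
  Ico (((i:ℕ):ℝ)/N) ((((i:ℕ):ℝ)+1)/N)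

lemma Ameas (N : ℕ) (i : Fin (N+1)) : MeasurableSet (Agrid N i) := measurableSet_Ico

lemma Adisj {N : ℕ} (hN : 0 < (N:ℝ)) : Pairwise (Function.onFun Disjoint (Agrid N)) := by
  have key : ∀ i j : Fin (N+1), (i:ℕ) < (j:ℕ) → Disjoint (Agrid N i) (Agrid N j) := by
    intro i j h
    rw [Agrid, Agrid, Set.Ico_disjoint_Ico]
    calc min ((((i:ℕ):ℝ)+1)/N) ((((j:ℕ):ℝ)+1)/N) ≤ (((i:ℕ):ℝ)+1)/N := min_le_left _ _
      _ ≤ ((j:ℕ):ℝ)/N := by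
          apply div_le_div_of_nonneg_right ?_ hN.le |>.trans_eq rfl
          · exact_mod_cast Nat.succ_le_of_lt h
      _ ≤ max (((i:ℕ):ℝ)/N) (((j:ℕ):ℝ)/N) := le_max_right _ _
  intro i j hij
  have : (i:ℕ) ≠ (j:ℕ) := fun h => hij (Fin.ext h)
  rcases this.lt_or_gt with h | h
  · exact key i j h
  · exact (key j i h).symm

lemma Acover {N : ℕ} (hN : 0 < (N:ℝ)) : Icc (0:ℝ) 1 ⊆ ⋃ i, Agrid N i := by
  intro x hx
  have h0 : (0:ℝ) ≤ (N:ℝ) * x := mul_nonneg hN.le hx.1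
  have hfl : (0:ℤ) ≤ ⌊(N:ℝ)*x⌋ := Int.floor_nonneg.mpr h0
  set i0 : ℕ := ⌊(N:ℝ) * x⌋.toNat with hi0def
  have hcast : ((i0:ℕ):ℝ) = ((⌊(N:ℝ)*x⌋ : ℤ) : ℝ) := by
    rw [hi0def]; exact_mod_cast congrArg (fun z : ℤ => (z:ℝ)) (Int.toNat_of_nonneg hfl)
  have hi0 : i0 ≤ N := by
    have h1 : ⌊(N:ℝ)*x⌋ ≤ ⌊(N:ℝ)⌋ := Int.floor_le_floor (by nlinarith [hx.2])
    rw [Int.floor_natCast] at h1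
    omega
  refine mem_iUnion.mpr ⟨⟨i0, Nat.lt_succ_of_le hi0⟩, ?_, ?_⟩
  · rw [div_le_iff₀ hN]
    have := Int.floor_le ((N:ℝ)*x)
    simp only [hcast]
    linarith
  · rw [lt_div_iff₀ hN]
    have := Int.lt_floor_add_one ((N:ℝ)*x)
    simp only [hcast]
    linarith
noncomputable def clamp (x : ℝ) : ℝ := max 0 (min 1 x)

lemma clamp_mem (x : ℝ) : clamp x ∈ Icc (0:ℝ) 1 := by
  constructor
  · exact le_max_left _ _
  · simp only [clamp, max_le_iff]
    exact ⟨zero_le_one, min_le_left _ _⟩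

lemma clamp_eq {x : ℝ} (hx : x ∈ Icc (0:ℝ) 1) : clamp x = x := by
  simp [clamp, min_eq_right hx.2, max_eq_right hx.1]

lemma continuous_clamp : Continuous clamp :=
  continuous_const.max (continuous_const.min continuous_id)

lemma integral_of_piecewise {m : ℕ} (β : Measure ℝ) [IsFiniteMeasure β]
    (A : Fin m → Set ℝ) (hmeas : ∀ i, MeasurableSet (A i))
    (hdisj : Pairwise (Function.onFun Disjoint A))
    (hcover : β (⋃ i, A i)ᶜ = 0)
    (f : ℝ → ℝ) (hint : Integrable f β)
    (v : Fin m → ℝ) (hv : ∀ i, ∀ x ∈ A i, f x = v i) :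
    ∫ x, f x ∂β = ∑ i, (β (A i)).toReal * v i := by
  have h1 : β.restrict (⋃ i, A i) = β :=
    Measure.restrict_eq_self_of_ae_mem (by
      rw [MeasureTheory.ae_iff]
      convert hcover using 2; rfl)
  have h2 : ∫ x, f x ∂β = ∫ x in ⋃ i, A i, f x ∂β := by rw [h1]
  rw [h2, integral_iUnion_fintype hmeas hdisj (fun i => hint.integrableOn)]
  refine Finset.sum_congr rfl fun i _ => ?_
  rw [setIntegral_congr_fun (hmeas i) (fun x hx => hv i x hx), setIntegral_const, smul_eq_mul, Measure.real]

noncomputable def gfun (N : ℕ) : ℝ → ℝ :=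
  fun x => ∑ i : Fin (N+1), (Agrid N i).indicator (fun _ => ((i:ℕ):ℝ)/N) x

lemma gfun_meas (N : ℕ) : Measurable (gfun N) :=
  Finset.measurable_sum _ fun i _ => measurable_const.indicator (Ameas N i)

lemma gfun_eq {N : ℕ} (hN : 0 < (N:ℝ)) {i : Fin (N+1)} {x : ℝ} (hx : x ∈ Agrid N i) :
    gfun N x = ((i:ℕ):ℝ)/N := by
  rw [gfun, Finset.sum_eq_single i]
  · rw [indicator_of_mem hx]
  · intro j _ hji
    exact indicator_of_notMem (Set.disjoint_right.mp (Adisj hN hji) hx) _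
  · simp

lemma gfun_dist {N : ℕ} (hN : 0 < (N:ℝ)) {x : ℝ} (hx : x ∈ Icc (0:ℝ) 1) :
    |x - gfun N x| < 1/N ∧ gfun N x ∈ Icc (0:ℝ) 1 := by
  obtain ⟨i, hi⟩ := mem_iUnion.mp (Acover hN hx)
  rw [gfun_eq hN hi]
  obtain ⟨h1, h2⟩ := hi
  have hd : (((i:ℕ):ℝ)+1)/N = ((i:ℕ):ℝ)/N + 1/N := add_div _ _ _
  rw [hd] at h2
  have h1N : (0:ℝ) < 1/N := by positivity
  have hiN : ((i:ℕ):ℝ) ≤ N := by exact_mod_cast Fin.is_le i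
  refine ⟨abs_lt.mpr ⟨by linarith, by linarith⟩, by positivity, ?_⟩
  rw [div_le_one hN]; exact hiN

lemma key_psd (K : ℝ → ℝ → ℝ) (hKc : Continuous fun p : ℝ × ℝ => K p.1 p.2)
    (M : ℝ) (hM : ∀ x y, |K x y| ≤ M)
    (hpsdK : ∀ (n : ℕ) (x c : Fin n → ℝ), (∀ i, x i ∈ Icc (0:ℝ) 1) →
      0 ≤ ∑ i, ∑ j, c i * c j * K (x i) (x j))
    (ξ η : Measure ℝ) [IsProbabilityMeasure ξ] [IsProbabilityMeasure η]
    (hξ : ξ (Icc (0:ℝ) 1)ᶜ = 0) (hη : η (Icc (0:ℝ) 1)ᶜ = 0) :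
    (∫ x, ∫ y, K x y ∂η ∂ξ) + (∫ x, ∫ y, K x y ∂ξ ∂η) ≤
      (∫ x, ∫ y, K x y ∂ξ ∂ξ) + (∫ x, ∫ y, K x y ∂η ∂η) := by
  have main : ∀ ε : ℝ, 0 < ε →
      (∫ x, ∫ y, K x y ∂η ∂ξ) + (∫ x, ∫ y, K x y ∂ξ ∂η) ≤
      (∫ x, ∫ y, K x y ∂ξ ∂ξ) + (∫ x, ∫ y, K x y ∂η ∂η) + 4*ε := by
    intro ε hε
    -- uniform continuity on the square
    have huc : UniformContinuousOn (fun p : ℝ×ℝ => K p.1 p.2)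
        (Icc (0:ℝ) 1 ×ˢ Icc (0:ℝ) 1) :=
      (isCompact_Icc.prod isCompact_Icc).uniformContinuousOn_of_continuous hKc.continuousOn
    rw [Metric.uniformContinuousOn_iff] at huc
    obtain ⟨δ, hδ0, hδ⟩ := huc ε hε
    obtain ⟨n, hn⟩ := exists_nat_one_div_lt hδ0
    set N := n+1 with hNdef
    have hN : 0 < (N:ℝ) := by positivity
    have h1N : 1/(N:ℝ) < δ := by rw [hNdef]; push_cast; exact hn
    -- pointwise approximation
    have hpt : ∀ x ∈ Icc (0:ℝ) 1, ∀ y ∈ Icc (0:ℝ) 1,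
        |K x y - K (gfun N x) (gfun N y)| ≤ ε := by
      intro x hx y hy
      obtain ⟨hdx, hgx⟩ := gfun_dist hN hx
      obtain ⟨hdy, hgy⟩ := gfun_dist hN hy
      have h := hδ (x, y) ⟨hx, hy⟩ (gfun N x, gfun N y) ⟨hgx, hgy⟩ ?_
      · rw [Real.dist_eq] at h
        exact le_of_lt (by simpa using h)
      · rw [Prod.dist_eq]
        exact max_lt (by rw [Real.dist_eq]; exact hdx.trans h1N)
          (by rw [Real.dist_eq]; exact hdy.trans h1N)
    -- per-pair approximation by grid sums
    have Hpair : ∀ (α β : Measure ℝ), IsProbabilityMeasure α → IsProbabilityMeasure β →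
        α (Icc (0:ℝ) 1)ᶜ = 0 → β (Icc (0:ℝ) 1)ᶜ = 0 →
        |(∫ x, ∫ y, K x y ∂β ∂α) -
          ∑ i : Fin (N+1), (α (Agrid N i)).toReal *
            ∑ j : Fin (N+1), (β (Agrid N j)).toReal * K (((i:ℕ):ℝ)/N) (((j:ℕ):ℝ)/N)| ≤ ε := by
      intro α β hαp hβp hα hβ
      haveI := hαp; haveI := hβp
      have hαa : ∀ᵐ x ∂α, x ∈ Icc (0:ℝ) 1 := ae_mem_of_compl hα
      have hβa : ∀ᵐ y ∂β, y ∈ Icc (0:ℝ) 1 := ae_mem_of_compl hβ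
      have hcovβ : β (⋃ i, Agrid N i)ᶜ = 0 :=
        measure_mono_null (compl_subset_compl.mpr (Acover hN)) hβ
      have hcovα : α (⋃ i, Agrid N i)ᶜ = 0 :=
        measure_mono_null (compl_subset_compl.mpr (Acover hN)) hα
      -- measurability of step integrand
      have hgm : ∀ z : ℝ, Measurable fun y => K z (gfun N y) := fun z =>
        ((hKxc hKc z).measurable).comp (gfun_meas N)
      have hinner : ∀ x : ℝ, ∫ y, K (gfun N x) (gfun N y) ∂β =
          ∑ j : Fin (N+1), (β (Agrid N j)).toReal * K (gfun N x) (((j:ℕ):ℝ)/N) := by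
        intro x
        exact integral_of_piecewise β _ (Ameas N) (Adisj hN) hcovβ _
          (integrable_of_bdd (hgm _).aestronglyMeasurable (fun y => hM _ _))
          _ (fun j y hy => by rw [gfun_eq hN hy])
      have houter : (∫ x, ∫ y, K (gfun N x) (gfun N y) ∂β ∂α) =
          ∑ i : Fin (N+1), (α (Agrid N i)).toReal *
            ∑ j : Fin (N+1), (β (Agrid N j)).toReal * K (((i:ℕ):ℝ)/N) (((j:ℕ):ℝ)/N) := by
        refine integral_of_piecewise α _ (Ameas N) (Adisj hN) hcovα _ ?_ _
          (fun i x hx => by rw [hinner x, gfun_eq hN hx])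
        · refine integrable_of_bdd (M := M) ?_ ?_
          · have h1 : StronglyMeasurable fun p : ℝ × ℝ => K (gfun N p.1) (gfun N p.2) :=
              (hKc.measurable.comp
                (((gfun_meas N).comp measurable_fst).prodMk
                  ((gfun_meas N).comp measurable_snd))).stronglyMeasurable
            exact (h1.integral_prod_right' (ν := β)).aestronglyMeasurable
          · intro x
            have := norm_integral_le_of_norm_le_const (μ := β)
              (f := fun y => K (gfun N x) (gfun N y)) (C := M)
              (Filter.Eventually.of_forall fun y => by
                rw [Real.norm_eq_abs]; exact hM _ _)
            simpa using this
      -- the difference bound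
      have hdiff : |(∫ x, ∫ y, K x y ∂β ∂α) -
          (∫ x, ∫ y, K (gfun N x) (gfun N y) ∂β ∂α)| ≤ ε := by
        have hint1 : Integrable (fun x => ∫ y, K x y ∂β) α := intK_outer hKc hM α β
        have hint2 : Integrable (fun x => ∫ y, K (gfun N x) (gfun N y) ∂β) α := by
          refine integrable_of_bdd (M := M) ?_ ?_
          · have h1 : StronglyMeasurable fun p : ℝ × ℝ => K (gfun N p.1) (gfun N p.2) :=
              (hKc.measurable.comp
                (((gfun_meas N).comp measurable_fst).prodMk
                  ((gfun_meas N).comp measurable_snd))).stronglyMeasurable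
            exact (h1.integral_prod_right' (ν := β)).aestronglyMeasurable
          · intro x
            have := norm_integral_le_of_norm_le_const (μ := β)
              (f := fun y => K (gfun N x) (gfun N y)) (C := M)
              (Filter.Eventually.of_forall fun y => by
                rw [Real.norm_eq_abs]; exact hM _ _)
            simpa using this
        rw [← integral_sub hint1 hint2]
        have hb : ∀ᵐ x ∂α, ‖(∫ y, K x y ∂β) - ∫ y, K (gfun N x) (gfun N y) ∂β‖ ≤ ε := by
          filter_upwards [hαa] with x hx
          rw [← integral_sub (intK_inner hKc hM x β)
            (integrable_of_bdd (hgm _).aestronglyMeasurable (fun y => hM _ _))]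
          have := norm_integral_le_of_norm_le_const (μ := β)
            (f := fun y => K x y - K (gfun N x) (gfun N y)) (C := ε)
            (by filter_upwards [hβa] with y hy
                rw [Real.norm_eq_abs]; exact hpt x hx y hy)
          simpa using this
        have := norm_integral_le_of_norm_le_const (μ := α)
          (f := fun x => (∫ y, K x y ∂β) - ∫ y, K (gfun N x) (gfun N y) ∂β) (C := ε) hb
        simpa using this
      rw [← houter]
      exact hdiff
    -- combine the four pairs
    have h1 := Hpair ξ η inferInstance inferInstance hξ hη
    have h2 := Hpair η ξ inferInstance inferInstance hη hξ
    have h3 := Hpair ξ ξ inferInstance inferInstance hξ hξ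
    have h4 := Hpair η η inferInstance inferInstance hη hη
    set a : Fin (N+1) → ℝ := fun i => (ξ (Agrid N i)).toReal with ha
    set b : Fin (N+1) → ℝ := fun i => (η (Agrid N i)).toReal with hb
    have hpos := hpsdK (N+1) (fun i => ((i:ℕ):ℝ)/N) (fun i => a i - b i)
      (fun i => ⟨by positivity, by
        rw [div_le_one hN]; exact_mod_cast Fin.is_le i⟩)
    have hexp : (∑ i : Fin (N+1), ∑ j : Fin (N+1),
          (a i - b i) * (a j - b j) * K (((i:ℕ):ℝ)/N) (((j:ℕ):ℝ)/N)) =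
        (∑ i : Fin (N+1), a i * ∑ j : Fin (N+1), a j * K (((i:ℕ):ℝ)/N) (((j:ℕ):ℝ)/N))
        + (∑ i : Fin (N+1), b i * ∑ j : Fin (N+1), b j * K (((i:ℕ):ℝ)/N) (((j:ℕ):ℝ)/N))
        - (∑ i : Fin (N+1), a i * ∑ j : Fin (N+1), b j * K (((i:ℕ):ℝ)/N) (((j:ℕ):ℝ)/N))
        - (∑ i : Fin (N+1), b i * ∑ j : Fin (N+1), a j * K (((i:ℕ):ℝ)/N) (((j:ℕ):ℝ)/N)) := by
      simp only [Finset.mul_sum]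
      rw [← Finset.sum_add_distrib, ← Finset.sum_sub_distrib, ← Finset.sum_sub_distrib]
      refine Finset.sum_congr rfl fun i _ => ?_
      rw [← Finset.sum_add_distrib, ← Finset.sum_sub_distrib, ← Finset.sum_sub_distrib]
      refine Finset.sum_congr rfl fun j _ => ?_
      ring
    rw [abs_le] at h1 h2 h3 h4
    have hpos' : (0:ℝ) ≤ ∑ i : Fin (N+1), ∑ j : Fin (N+1),
        (a i - b i) * (a j - b j) * K (((i:ℕ):ℝ)/N) (((j:ℕ):ℝ)/N) := by simpa using hpos
    rw [hexp] at hpos'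
    linarith [h1.1, h1.2, h2.1, h2.2, h3.1, h3.2, h4.1, h4.2, hpos']
  refine le_of_forall_pos_le_add fun ε hε => ?_
  have := main (ε/4) (by linarith)
  linarith

/-- The quadratic energy functional `V(ξ) = ∬ k dξ dξ`. -/
noncomputable def Vfun (k : ℝ → ℝ → ℝ) (ξ : Measure ℝ) : ℝ :=
  ∫ x, ∫ y, k x y ∂ξ ∂ξ

theorem stmt17 (k : ℝ → ℝ → ℝ)
    (hk : ContinuousOn (fun p : ℝ × ℝ => k p.1 p.2) (Set.Icc 0 1 ×ˢ Set.Icc 0 1))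
    (hsymm : ∀ x ∈ Set.Icc (0:ℝ) 1, ∀ y ∈ Set.Icc (0:ℝ) 1, k x y = k y x)
    (hpsd : ∀ (n : ℕ) (x : Fin n → ℝ) (c : Fin n → ℝ),
      (∀ i, x i ∈ Set.Icc (0:ℝ) 1) →
      0 ≤ ∑ i : Fin n, ∑ j : Fin n, c i * c j * k (x i) (x j))
    (η : Measure ℝ) [IsProbabilityMeasure η] (hη : η (Set.Icc (0:ℝ) 1)ᶜ = 0) :
    (∀ ξ : Measure ℝ, IsProbabilityMeasure ξ → ξ (Set.Icc (0:ℝ) 1)ᶜ = 0 →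
      Vfun k η ≤ Vfun k ξ) ↔
    (∀ x ∈ Set.Icc (0:ℝ) 1, Vfun k η ≤ ∫ y, k x y ∂η) := by
  set K : ℝ → ℝ → ℝ := fun x y => k (clamp x) (clamp y) with hKdef
  have hKc : Continuous fun p : ℝ × ℝ => K p.1 p.2 := by
    have hc : Continuous fun p : ℝ × ℝ => (clamp p.1, clamp p.2) :=
      (continuous_clamp.comp continuous_fst).prodMk (continuous_clamp.comp continuous_snd)
    exact hk.comp_continuous hc (fun p => ⟨clamp_mem _, clamp_mem _⟩)
  have hKeq : ∀ x ∈ Icc (0:ℝ) 1, ∀ y ∈ Icc (0:ℝ) 1, K x y = k x y := fun x hx y hy => by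
    rw [hKdef]; simp only; rw [clamp_eq hx, clamp_eq hy]
  have hKsymm : ∀ x y, K x y = K y x := fun x y =>
    hsymm _ (clamp_mem _) _ (clamp_mem _)
  obtain ⟨M, hMb⟩ := (isCompact_Icc.prod isCompact_Icc).exists_bound_of_continuousOn hk
  have hM : ∀ x y, |K x y| ≤ M := fun x y => by
    have := hMb (clamp x, clamp y) ⟨clamp_mem _, clamp_mem _⟩
    simpa [Real.norm_eq_abs] using this
  have hKpsd : ∀ (n : ℕ) (x c : Fin n → ℝ), (∀ i, x i ∈ Icc (0:ℝ) 1) →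
      0 ≤ ∑ i, ∑ j, c i * c j * K (x i) (x j) := by
    intro n x c hx
    have h := hpsd n x c hx
    have he : ∀ i j : Fin n, K (x i) (x j) = k (x i) (x j) := fun i j =>
      hKeq _ (hx i) _ (hx j)
    calc (0:ℝ) ≤ ∑ i, ∑ j, c i * c j * k (x i) (x j) := h
      _ = ∑ i, ∑ j, c i * c j * K (x i) (x j) := by
          exact Finset.sum_congr rfl fun i _ => Finset.sum_congr rfl fun j _ => by
            rw [he i j]
  have hVconv : ∀ μ : Measure ℝ, μ (Icc (0:ℝ) 1)ᶜ = 0 → Vfun k μ = Vfun K μ := by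
    intro μ hμ
    have hμa : ∀ᵐ x ∂μ, x ∈ Icc (0:ℝ) 1 := ae_mem_of_compl hμ
    unfold Vfun
    refine integral_congr_ae ?_
    filter_upwards [hμa] with x hx
    refine integral_congr_ae ?_
    filter_upwards [hμa] with y hy
    exact (hKeq x hx y hy).symm
  have hAconv : ∀ x ∈ Icc (0:ℝ) 1, (∫ y, k x y ∂η) = ∫ y, K x y ∂η := by
    intro x hx
    refine integral_congr_ae ?_
    filter_upwards [ae_mem_of_compl hη] with y hy
    exact (hKeq x hx y hy).symm
  constructor
  · -- minimizer implies pointwise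
    intro hmin x₀ hx₀
    set A0 : ℝ := ∫ y, K x₀ y ∂η with hA0
    set B : ℝ := K x₀ x₀ with hB
    set V : ℝ := Vfun K η with hV
    have hVk : Vfun k η = V := hVconv η hη
    have hstep : ∀ t : ℝ, t ∈ Ioc (0:ℝ) 1 → 0 ≤ (t-2)*V + 2*(1-t)*A0 + t*B := by
      intro t ht
      obtain ⟨ht0, ht1⟩ := ht
      set μt : Measure ℝ := ENNReal.ofReal (1-t) • η + ENNReal.ofReal t • Measure.dirac x₀
        with hμt
      have hμtp : IsProbabilityMeasure μt := by
        constructor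
        rw [hμt]
        simp only [Measure.add_apply, Measure.smul_apply, smul_eq_mul, measure_univ,
          mul_one]
        rw [← ENNReal.ofReal_add (by linarith) ht0.le]
        norm_num
      have hμts : μt (Icc (0:ℝ) 1)ᶜ = 0 := by
        rw [hμt]
        simp only [Measure.add_apply, Measure.smul_apply, smul_eq_mul, hη, mul_zero,
          zero_add]
        rw [Measure.dirac_apply' _ measurableSet_Icc.compl]
        simp [hx₀]
      have hVle := hmin μt hμtp hμts
      rw [hVk, hVconv μt hμts] at hVle
      haveI := hμtp
      have hint : ∀ C : ℝ, ∀ f : ℝ → ℝ, StronglyMeasurable f → (∀ x, |f x| ≤ C) →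
          ∫ x, f x ∂μt = (1-t) * ∫ x, f x ∂η + t * f x₀ := by
        intro C f hfm hfb
        have hfη : Integrable f η := integrable_of_bdd hfm.aestronglyMeasurable hfb
        have hfd : Integrable f (Measure.dirac x₀) :=
          integrable_of_bdd hfm.aestronglyMeasurable hfb
        rw [hμt, integral_add_measure (hfη.smul_measure ENNReal.ofReal_ne_top)
            (hfd.smul_measure ENNReal.ofReal_ne_top),
          integral_smul_measure, integral_smul_measure, integral_dirac,
          ENNReal.toReal_ofReal (by linarith : (0:ℝ) ≤ 1-t),
          ENNReal.toReal_ofReal ht0.le, smul_eq_mul, smul_eq_mul]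
      have hinner : ∀ x, ∫ y, K x y ∂μt = (1-t) * (∫ y, K x y ∂η) + t * K x x₀ :=
        fun x => hint M (K x) (hKxc hKc x).stronglyMeasurable (hM x)
      have hKx0c : Continuous fun x => K x x₀ :=
        hKc.comp (continuous_id.prodMk continuous_const)
      set F : ℝ → ℝ := fun x => (1-t) * (∫ y, K x y ∂η) + t * K x x₀ with hF
      have hFm : StronglyMeasurable F :=
        (stronglyMeasurable_const.mul (smK_outer hKc η)).add
          (stronglyMeasurable_const.mul hKx0c.stronglyMeasurable)
      have hFb : ∀ x, |F x| ≤ M := by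
        intro x
        calc |F x| ≤ |(1-t) * (∫ y, K x y ∂η)| + |t * K x x₀| := abs_add_le _ _
          _ = (1-t) * |∫ y, K x y ∂η| + t * |K x x₀| := by
              rw [abs_mul, abs_mul, abs_of_nonneg (by linarith : (0:ℝ) ≤ 1-t),
                abs_of_nonneg ht0.le]
          _ ≤ (1-t) * M + t * M := by
              gcongr
              · exact absK_integral_le hM x η
              · exact hM x x₀
          _ = M := by ring
      have hVμt : Vfun K μt = (1-t)*((1-t)*V + t*A0) + t*((1-t)*A0 + t*B) := by
        have e1 : Vfun K μt = ∫ x, F x ∂μt := by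
          unfold Vfun
          exact integral_congr_ae (Filter.Eventually.of_forall hinner)
        rw [e1, hint M F hFm hFb]
        have e2 : ∫ x, F x ∂η = (1-t)*V + t*A0 := by
          rw [hF]
          rw [integral_add ((intK_outer hKc hM η η).const_mul _)
            ((integrable_of_bdd hKx0c.stronglyMeasurable.aestronglyMeasurable
              (fun x => hM x x₀)).const_mul _)]
          rw [integral_const_mul, integral_const_mul]
          have e3 : ∫ x, K x x₀ ∂η = A0 := by
            rw [hA0]
            exact integral_congr_ae (Filter.Eventually.of_forall fun x => by
              rw [hKsymm])
          rw [e3, hV]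
          rfl
        rw [e2]
      rw [hVμt] at hVle
      have h0 : 0 ≤ t * ((t-2)*V + 2*(1-t)*A0 + t*B) := by nlinarith [hVle]
      nlinarith [h0, ht0]
    have hlim : Filter.Tendsto (fun t : ℝ => (t-2)*V + 2*(1-t)*A0 + t*B)
        (nhdsWithin 0 (Ioi 0)) (nhds ((0-2)*V + 2*(1-0)*A0 + 0*B)) := by
      apply Filter.Tendsto.mono_left ?_ nhdsWithin_le_nhds
      refine Continuous.tendsto ?_ 0
      exact (((continuous_id.sub continuous_const).mul continuous_const).add
        ((continuous_const.mul (continuous_const.sub continuous_id)).mul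
          continuous_const)).add (continuous_id.mul continuous_const)
    have hev : ∀ᶠ t in nhdsWithin (0:ℝ) (Ioi 0), 0 ≤ (t-2)*V + 2*(1-t)*A0 + t*B :=
      Filter.eventually_of_mem (Ioc_mem_nhdsGT_of_mem (by norm_num : (0:ℝ) ∈ Ico (0:ℝ) 1))
        hstep
    have hfin : (0:ℝ) ≤ (0-2)*V + 2*(1-0)*A0 + 0*B := ge_of_tendsto hlim hev
    rw [hVk, hAconv x₀ hx₀]
    linarith [hfin]
  · -- pointwise implies minimizer
    intro hptw ξ hξp hξs
    haveI := hξp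
    rw [hVconv η hη, hVconv ξ hξs]
    have hptK : ∀ x ∈ Icc (0:ℝ) 1, Vfun K η ≤ ∫ y, K x y ∂η := by
      intro x hx
      rw [← hAconv x hx, ← hVconv η hη]
      exact hptw x hx
    set V := Vfun K η with hV
    have hkey := key_psd K hKc M hM hKpsd ξ η hξs hη
    have h1 : V ≤ ∫ x, ∫ y, K x y ∂η ∂ξ := by
      have hae : ∀ᵐ x ∂ξ, V ≤ ∫ y, K x y ∂η := by
        filter_upwards [ae_mem_of_compl hξs] with x hx using hptK x hx
      calc V = ∫ _x, V ∂ξ := by simp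
        _ ≤ _ := integral_mono_ae (integrable_const V) (intK_outer hKc hM ξ η) hae
    have h2 : V ≤ ∫ x, ∫ y, K x y ∂ξ ∂η := by
      have hswap : (∫ x, ∫ y, K x y ∂ξ ∂η) = ∫ y, ∫ x, K x y ∂η ∂ξ := by
        apply integral_integral_swap
        exact integrable_of_bdd hKc.aestronglyMeasurable (fun p => hM p.1 p.2)
      rw [hswap]
      have e : (∫ y, ∫ x, K x y ∂η ∂ξ) = ∫ y, ∫ x, K y x ∂η ∂ξ :=
        integral_congr_ae (Filter.Eventually.of_forall fun y =>
          integral_congr_ae (Filter.Eventually.of_forall fun x => by rw [hKsymm]))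
      rw [e]
      exact h1
    have e1 : Vfun K ξ = ∫ x, ∫ y, K x y ∂ξ ∂ξ := rfl
    have e2 : V = ∫ x, ∫ y, K x y ∂η ∂η := rfl
    rw [e1]
    linarith [hkey, h1, h2]
end
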